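/- Let C be a pretriangulated category with shift functor ⟦1⟧, let w ≤ -1 be an integer, let S be a set of objects of C, and let X := { s⟦i⟧ : s ∈ S, w + 1 ≤ i ≤ 0 }. For classes of objects M, N of C set M * N := { t : there is a distinguished triangle m → t → n → m⟦1⟧ with m ∈ M and n ∈ N }, let M^⊕ denote the class of all direct summands of objects of M, and define (X)_1 := X and (X)_n := (X * (X)_{n-1})^⊕ for n ≥ 2. Assume that every object of C is a direct summand of an object belonging to (X)_n for some n ≥ 1. Then for every object t of C that is not a zero object there exist s ∈ S and an integer k with w + 1 ≤ k ≤ 0 such that Hom(t, s⟦k⟧) ≠ 0. -/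

import Mathlib

open CategoryTheory CategoryTheory.Limits CategoryTheory.Pretriangulated

universe v u

variable {C : Type u} [Category.{v} C] [HasZeroObject C] [Preadditive C]
  [HasShift C ℤ] [∀ n : ℤ, (shiftFunctor C n).Additive] [Pretriangulated C]

/-- `M * N`: the class of objects `t` fitting in a distinguished triangle
`m → t → n → m⟦1⟧` with `m ∈ M` and `n ∈ N`. -/
def starSet (M N : Set C) : Set C :=
  {t | ∃ m ∈ M, ∃ n ∈ N, ∃ (f : m ⟶ t) (g : t ⟶ n) (h : n ⟶ m⟦(1 : ℤ)⟧),
    Triangle.mk f g h ∈ distTriang C}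

/-- `M^⊕`: the class of all direct summands of objects of `M`. -/
def summandClosure (M : Set C) : Set C :=
  {t | ∃ m ∈ M, ∃ (i : t ⟶ m) (r : m ⟶ t), i ≫ r = 𝟙 t}

/-- `X = { s⟦i⟧ : s ∈ S, w + 1 ≤ i ≤ 0 }`. -/
def shiftSet (w : ℤ) (S : Set C) : Set C :=
  {y | ∃ s ∈ S, ∃ i : ℤ, w + 1 ≤ i ∧ i ≤ 0 ∧ y = s⟦i⟧}

/-- The classes `(X)_n` (indexed here from `0`, so `layers w S (n - 1) = (X)_n`):
`(X)_1 = X` and `(X)_{n+1} = (X * (X)_n)^⊕`. -/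
def layers (w : ℤ) (S : Set C) : ℕ → Set C
  | 0 => shiftSet w S
  | n + 1 => summandClosure (starSet (shiftSet w S) (layers w S n))

/-- if every object of a pretriangulated category `C` is a direct summand of
an object of some `(X)_n`, where `X = { s⟦i⟧ : s ∈ S, w + 1 ≤ i ≤ 0 }`, then for every
nonzero object `t` there are `s ∈ S` and `w + 1 ≤ k ≤ 0` with `Hom(t, s⟦k⟧) ≠ 0`. -/
theorem stmt_16 (w : ℤ) (hw : w ≤ -1) (S : Set C)
    (hgen : ∀ t : C, ∃ n : ℕ, t ∈ summandClosure (layers w S n)) :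
    ∀ t : C, ¬ IsZero t →
      ∃ s ∈ S, ∃ k : ℤ, w + 1 ≤ k ∧ k ≤ 0 ∧ ∃ f : t ⟶ s⟦k⟧, f ≠ 0 := by
  intro t ht
  by_contra h
  push_neg at h
  -- all maps from t to objects of shiftSet vanish
  have hX : ∀ x ∈ shiftSet w S, ∀ f : t ⟶ x, f = 0 := by
    rintro x ⟨s, hs, i, hi1, hi2, rfl⟩ f
    exact h s hs i hi1 hi2 f
  -- all maps from t to objects of layers vanish
  have hL : ∀ n : ℕ, ∀ x ∈ layers w S n, ∀ f : t ⟶ x, f = 0 := by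
    intro n
    induction n with
    | zero => exact hX
    | succ n ih =>
      rintro x ⟨y, ⟨m, hm, nn, hn, a, b, c, hT⟩, i, r, hir⟩ f
      have h1 : (f ≫ i) ≫ b = 0 := by
        rw [Category.assoc]; exact ih nn hn _
      obtain ⟨g, hg⟩ := Triangle.coyoneda_exact₂ _ hT (f ≫ i) h1
      have h2 : f ≫ i = 0 := by
        exact hg.trans (by rw [hX m hm g]; exact zero_comp)
      calc f = (f ≫ i) ≫ r := by rw [Category.assoc, hir, Category.comp_id]
        _ = 0 := by rw [h2, zero_comp]
  obtain ⟨n, m, hm, i, r, hir⟩ := hgen t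
  have : 𝟙 t = 0 := by rw [← hir, hL n m hm i, zero_comp]
  exact ht ((IsZero.iff_id_eq_zero t).2 this)
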